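/- Let m ≥ 1, let f : 𝕋 → ℂ be integrable with Σ_{k∈ℤ} |k|^m |f̂(k)| < ∞, let H be a complex Hilbert space, B ∈ B(H) self-adjoint, T₀ ∈ B(H) a contraction, and T_s := e^{isB} T₀. Then for every l with 1 ≤ l ≤ m, the map s ↦ f(T_s) is l-times differentiable in the operator norm and (d^l/ds^l) f(T_s) = Σ_{k=0}^{∞} f̂(k) (d^l/ds^l) T_s^k + Σ_{k=1}^{∞} f̂(−k) (d^l/ds^l) (T_s*)^k, where both series converge absolutely in the operator norm. -/

import Mathlib

open Complex MeasureTheory intervalIntegral ContinuousLinearMap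
open NormedSpace ContDiff
set_option maxHeartbeats 1000000

/-- The `l`-th Fourier coefficient of a function on the unit circle `𝕋`. -/
noncomputable def fourierCoeffT (g : ℂ → ℂ) (l : ℤ) : ℂ :=
  (1 / (2 * Real.pi)) •
    ∫ θ in (0:ℝ)..(2 * Real.pi), g (Complex.exp (Complex.I * θ)) * Complex.exp (-Complex.I * l * θ)

section AuxGen

open NormedSpace ContDiff
set_option maxHeartbeats 1000000

variable {𝔸 : Type*} [NormedRing 𝔸] [NormedAlgebra ℝ 𝔸]

lemma aux_hasDerivAt [CompleteSpace 𝔸] (A C D : 𝔸) (s : ℝ) :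
    HasDerivAt (fun u : ℝ => C * exp (u • A) * D) (C * (exp (s • A) * A) * D) s :=
  ((hasDerivAt_exp_smul_const A s).const_mul C).mul_const D

lemma aux_iteratedDeriv [CompleteSpace 𝔸] (A C D : 𝔸) (n : ℕ) :
    iteratedDeriv n (fun s : ℝ => C * exp (s • A) * D)
      = fun s => C * (NormedSpace.exp (s • A) * A ^ n) * D := by
  induction n with
  | zero => simp
  | succ n IH =>
      rw [iteratedDeriv_succ, IH]
      funext s
      have h : HasDerivAt (fun u : ℝ => C * (exp (u • A) * A ^ n) * D)
          (C * (exp (s • A) * A * A ^ n) * D) s :=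
        (((hasDerivAt_exp_smul_const A s).mul_const (A ^ n)).const_mul C).mul_const D
      rw [h.deriv, pow_succ']; simp [mul_assoc]

lemma aux_contDiff [CompleteSpace 𝔸] (A : 𝔸) (n : ℕ) : ∀ C D : 𝔸,
    ContDiff ℝ (n : WithTop ℕ∞) (fun s : ℝ => C * exp (s • A) * D) := by
  induction n with
  | zero =>
      intro C D
      rw [Nat.cast_zero, contDiff_zero]
      exact Differentiable.continuous (fun s => (aux_hasDerivAt A C D s).differentiableAt)
  | succ n IH =>
      intro C D
      rw [Nat.cast_succ, contDiff_succ_iff_deriv]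
      refine ⟨fun s => (aux_hasDerivAt A C D s).differentiableAt, by simp, ?_⟩
      have hderiv : deriv (fun s : ℝ => C * exp (s • A) * D)
          = fun s => C * NormedSpace.exp (s • A) * (A * D) := by
        funext s
        rw [(aux_hasDerivAt A C D s).deriv, ← mul_assoc, mul_assoc]
      rw [hderiv]
      exact IH C (A * D)

lemma aux_contDiff_infty [CompleteSpace 𝔸] (A C D : 𝔸) :
    ContDiff ℝ ∞ (fun s : ℝ => C * exp (s • A) * D) :=
  contDiff_infty.mpr fun n => aux_contDiff A n C D

lemma aux_pow_bound (G : ℝ → 𝔸) (hG : ContDiff ℝ ∞ G)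
    (M : ℝ) (hone : ‖(1 : 𝔸)‖ ≤ 1)
    (hb : ∀ (n : ℕ) (s : ℝ), ‖iteratedFDeriv ℝ n G s‖ ≤ M ^ n) :
    ∀ (k n : ℕ) (s : ℝ), ‖iteratedFDeriv ℝ n (fun t => G t ^ k) s‖ ≤ (k : ℝ) ^ n * M ^ n := by
  have hM : 0 ≤ M := by simpa using (norm_nonneg _).trans (hb 1 0)
  intro k
  induction k with
  | zero =>
      intro n s
      simp only [pow_zero]
      cases n with
      | zero => simpa [norm_iteratedFDeriv_zero] using hone
      | succ n =>
          rw [iteratedFDeriv_const_of_ne (Nat.succ_ne_zero n)]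
          simp
  | succ k IH =>
      intro n s
      have hfun : (fun t => G t ^ (k + 1)) = fun t => G t ^ k * G t := by
        funext t; rw [pow_succ]
      rw [hfun]
      have key := norm_iteratedFDeriv_mul_le (𝕜 := ℝ) (N := (n : WithTop ℕ∞))
        ((hG.of_le (mod_cast le_top)).pow k) (hG.of_le (mod_cast le_top)) s le_rfl
      refine key.trans ?_
      have h1 : ∀ i ∈ Finset.range (n + 1),
          (n.choose i : ℝ) * ‖iteratedFDeriv ℝ i (fun t => G t ^ k) s‖ *
            ‖iteratedFDeriv ℝ (n - i) G s‖ ≤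
          (n.choose i : ℝ) * ((k : ℝ) ^ i * M ^ i) * M ^ (n - i) := by
        intro i _
        have := IH i s
        have := hb (n - i) s
        gcongr <;> positivity
      refine (Finset.sum_le_sum h1).trans ?_
      have h2 : ∀ i ∈ Finset.range (n + 1),
          (n.choose i : ℝ) * ((k : ℝ) ^ i * M ^ i) * M ^ (n - i)
            = (k : ℝ) ^ i * (1 : ℝ) ^ (n - i) * (n.choose i : ℝ) * M ^ n := by
        intro i hi
        have hi' : i ≤ n := Nat.lt_succ_iff.mp (Finset.mem_range.mp hi)
        have hMn : M ^ i * M ^ (n - i) = M ^ n := by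
          rw [← pow_add, Nat.add_sub_cancel' hi']
        rw [one_pow]
        calc (n.choose i : ℝ) * ((k : ℝ) ^ i * M ^ i) * M ^ (n - i)
            = (k : ℝ) ^ i * (n.choose i : ℝ) * (M ^ i * M ^ (n - i)) := by ring
          _ = (k : ℝ) ^ i * 1 * (n.choose i : ℝ) * M ^ n := by rw [hMn]; ring
      rw [Finset.sum_congr rfl h2, ← Finset.sum_mul, ← add_pow]
      push_cast
      exact le_rfl

end AuxGen

lemma norm_iteratedFDeriv_real {F : Type*} [NormedAddCommGroup F] [NormedSpace ℝ F]
    (f : ℝ → F) (n : ℕ) (x : ℝ) :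
    ‖iteratedFDeriv ℝ n f x‖ = ‖iteratedDeriv n f x‖ := by
  rw [iteratedFDeriv_eq_equiv_comp]
  exact LinearIsometryEquiv.norm_map _ _

lemma aux_iteratedDeriv_add {F : Type*} [NormedAddCommGroup F] [NormedSpace ℝ F] {i : ℕ}
    {f g : ℝ → F} (hf : ContDiff ℝ (i : WithTop ℕ∞) f) (hg : ContDiff ℝ (i : WithTop ℕ∞) g)
    (x : ℝ) :
    iteratedDeriv i (fun t => f t + g t) x = iteratedDeriv i f x + iteratedDeriv i g x := by
  simp only [iteratedDeriv_eq_iteratedFDeriv]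
  rw [iteratedFDeriv_add_apply' hf.contDiffAt hg.contDiffAt]
  rfl

lemma aux_iteratedDeriv_smul {F : Type*} [NormedAddCommGroup F] [NormedSpace ℝ F]
    [NormedSpace ℂ F] [SMulCommClass ℝ ℂ F]
    (c : ℂ) {i : ℕ} {f : ℝ → F} (hf : ContDiff ℝ (i : WithTop ℕ∞) f) (x : ℝ) :
    iteratedDeriv i (fun t => c • f t) x = c • iteratedDeriv i f x := by
  simp only [iteratedDeriv_eq_iteratedFDeriv]
  rw [iteratedFDeriv_const_smul_apply' hf.contDiffAt]
  rfl

lemma aux_iteratedDeriv_tsum {F : Type*} [NormedAddCommGroup F] [NormedSpace ℝ F]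
    [CompleteSpace F] {f : ℕ → ℝ → F} {v : ℕ → ℕ → ℝ} {N : ℕ∞}
    (hf : ∀ i, ContDiff ℝ N (f i)) (hv : ∀ k : ℕ, (k : ℕ∞) ≤ N → Summable (v k))
    (h'f : ∀ (k i : ℕ) (x : ℝ), (k : ℕ∞) ≤ N → ‖iteratedFDeriv ℝ k (f i) x‖ ≤ v k i)
    {l : ℕ} (hl : (l : ℕ∞) ≤ N) (s : ℝ) :
    iteratedDeriv l (fun y => ∑' k, f k y) s = ∑' k, iteratedDeriv l (f k) s := by
  have h1 := iteratedFDeriv_tsum_apply hf hv h'f hl s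
  rw [iteratedDeriv_eq_equiv_comp, Function.comp_apply, h1]
  have h2 : (ContinuousMultilinearMap.piFieldEquiv ℝ (Fin l) F).symm.toContinuousLinearEquiv
        (∑' k, iteratedFDeriv ℝ l (f k) s)
      = ∑' k, (ContinuousMultilinearMap.piFieldEquiv ℝ (Fin l)
          F).symm.toContinuousLinearEquiv (iteratedFDeriv ℝ l (f k) s) :=
    ContinuousLinearEquiv.map_tsum _
  exact h2.trans (tsum_congr fun k => by rw [iteratedDeriv_eq_equiv_comp]; rfl)

/-- Term-by-term differentiation of `s ↦ f(T_s)` for `T_s = e^{isB} T₀`, where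
`f(T) = Σ_{k≥0} f̂(k) T^k + Σ_{k≥1} f̂(−k) (T*)^k` and `Σ_k |k|^m |f̂(k)| < ∞`. -/
theorem stmt_15 (m : ℕ) (hm : 1 ≤ m) (f : ℂ → ℂ)
    (hf_int : IntervalIntegrable (fun θ : ℝ => f (Complex.exp (Complex.I * θ))) volume 0
      (2 * Real.pi))
    (hf_sum : Summable (fun k : ℤ => (|k| : ℝ) ^ m * ‖fourierCoeffT f k‖))
    (H : Type*) [NormedAddCommGroup H] [InnerProductSpace ℂ H] [CompleteSpace H]
    (B T₀ : H →L[ℂ] H) (hB : IsSelfAdjoint B) (hT₀ : ‖T₀‖ ≤ 1)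
    (T : ℝ → (H →L[ℂ] H))
    (hT : ∀ s : ℝ, T s = NormedSpace.exp (((s : ℂ) * Complex.I) • B) * T₀)
    (fT : ℝ → (H →L[ℂ] H))
    (hfT : ∀ s : ℝ, fT s = (∑' k : ℕ, fourierCoeffT f k • T s ^ k)
      + ∑' k : ℕ, fourierCoeffT f (-(k + 1)) • adjoint (T s) ^ (k + 1))
    (l : ℕ) (hl : 1 ≤ l) (hlm : l ≤ m) :
    ContDiff ℝ (l : ℕ∞) fT ∧
    ∀ s : ℝ,
      Summable (fun k : ℕ =>
        ‖fourierCoeffT f k • iteratedDeriv l (fun t : ℝ => T t ^ k) s‖) ∧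
      Summable (fun k : ℕ =>
        ‖fourierCoeffT f (-(k + 1)) •
          iteratedDeriv l (fun t : ℝ => adjoint (T t) ^ (k + 1)) s‖) ∧
      iteratedDeriv l fT s =
        (∑' k : ℕ, fourierCoeffT f k • iteratedDeriv l (fun t : ℝ => T t ^ k) s)
          + ∑' k : ℕ, fourierCoeffT f (-(k + 1)) •
              iteratedDeriv l (fun t : ℝ => adjoint (T t) ^ (k + 1)) s := by
  classical
  set c : ℤ → ℂ := fourierCoeffT f with hcdef
  set A : H →L[ℂ] H := Complex.I • B with hAdef
  -- basic facts about A
  have hAs : star A = -A := by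
    rw [hAdef, star_smul, hB.star_eq, Complex.star_def, Complex.conj_I, neg_smul]
  have hAs' : star (-A) = -(-A) := by rw [star_neg, hAs, neg_neg]
  have hAn : ‖A‖ = ‖B‖ := by rw [hAdef, norm_smul, Complex.norm_I, one_mul]
  have hAn' : ‖-A‖ = ‖B‖ := by rw [norm_neg, hAn]
  -- unitarity of the exponentials
  have hskew : ∀ (X : H →L[ℂ] H), star X = -X → ∀ s : ℝ,
      NormedSpace.exp (s • X) ∈ unitary (H →L[ℂ] H) := by
    intro X hX s
    letI : NormedAlgebra ℚ (H →L[ℂ] H) := NormedAlgebra.restrictScalars ℚ ℂ _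
    refine exp_mem_unitary_of_mem_skewAdjoint (skewAdjoint.mem_iff.mpr ?_)
    have h : (s : ℂ) • X = s • X := by norm_cast
    rw [← h, star_smul, hX, Complex.star_def, Complex.conj_ofReal, smul_neg, h]
  have hmulnorm : ∀ (X : H →L[ℂ] H), star X = -X → ∀ (s : ℝ) (Y : H →L[ℂ] H),
      ‖NormedSpace.exp (s • X) * Y‖ = ‖Y‖ :=
    fun X hX s Y => CStarRing.norm_mem_unitary_mul Y (hskew X hX s)
  have hone : ‖(1 : H →L[ℂ] H)‖ ≤ 1 := by
    rw [ContinuousLinearMap.one_def]; exact ContinuousLinearMap.norm_id_le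
  have hpowle : ∀ (X : H →L[ℂ] H) (n : ℕ), ‖X ^ n‖ ≤ ‖X‖ ^ n := by
    intro X n
    cases n with
    | zero => simpa using hone
    | succ n => exact norm_pow_le' X n.succ_pos
  -- rewriting T and its adjoint
  have hTfun : T = fun s : ℝ => 1 * NormedSpace.exp (s • A) * T₀ := by
    funext s
    rw [hT s, one_mul]
    congr 2
    rw [hAdef, mul_smul]; norm_cast
  have hssA : ∀ s : ℝ, star (s • A) = s • (-A) := by
    intro s
    have h : (s : ℂ) • A = s • A := by norm_cast
    rw [← h, star_smul, hAs, Complex.star_def, Complex.conj_ofReal]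
    norm_cast
  have hTafun : (fun s : ℝ => adjoint (T s))
      = fun s : ℝ => (star T₀) * NormedSpace.exp (s • (-A)) * 1 := by
    funext s
    rw [← ContinuousLinearMap.star_eq_adjoint, congrFun hTfun s, one_mul, mul_one,
      star_mul, star_exp, hssA s]
  -- smoothness
  have hTc : ContDiff ℝ ∞ T := by rw [hTfun]; exact aux_contDiff_infty A 1 T₀
  have hTac : ContDiff ℝ ∞ (fun s : ℝ => adjoint (T s)) := by
    rw [hTafun]; exact aux_contDiff_infty (-A) (star T₀) 1
  -- derivative bounds
  have hTb : ∀ (n : ℕ) (s : ℝ), ‖iteratedFDeriv ℝ n T s‖ ≤ ‖B‖ ^ n := by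
    intro n s
    rw [norm_iteratedFDeriv_real, hTfun, aux_iteratedDeriv A 1 T₀ n]
    show ‖1 * (NormedSpace.exp (s • A) * A ^ n) * T₀‖ ≤ ‖B‖ ^ n
    rw [one_mul, mul_assoc, hmulnorm A hAs s]
    calc ‖A ^ n * T₀‖ ≤ ‖A ^ n‖ * ‖T₀‖ := norm_mul_le _ _
      _ ≤ ‖A‖ ^ n * 1 := by
          apply mul_le_mul (hpowle A n) hT₀ (norm_nonneg _) (by positivity)
      _ = ‖B‖ ^ n := by rw [mul_one, hAn]
  have hTab : ∀ (n : ℕ) (s : ℝ), ‖iteratedFDeriv ℝ n (fun t : ℝ => adjoint (T t)) s‖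
      ≤ ‖B‖ ^ n := by
    intro n s
    rw [norm_iteratedFDeriv_real, hTafun, aux_iteratedDeriv (-A) (star T₀) 1 n]
    show ‖star T₀ * (NormedSpace.exp (s • (-A)) * (-A) ^ n) * 1‖ ≤ ‖B‖ ^ n
    rw [mul_one]
    calc ‖star T₀ * (NormedSpace.exp (s • (-A)) * (-A) ^ n)‖
        ≤ ‖star T₀‖ * ‖NormedSpace.exp (s • (-A)) * (-A) ^ n‖ := norm_mul_le _ _
      _ = ‖T₀‖ * ‖(-A) ^ n‖ := by rw [norm_star, hmulnorm (-A) hAs' s]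
      _ ≤ 1 * ‖-A‖ ^ n := by
          apply mul_le_mul hT₀ (hpowle (-A) n) (norm_nonneg _) (by norm_num)
      _ = ‖B‖ ^ n := by rw [one_mul, hAn']
  -- bounds for powers
  have haux1 := aux_pow_bound T hTc ‖B‖ hone hTb
  have haux2 := aux_pow_bound (fun t : ℝ => adjoint (T t)) hTac ‖B‖ hone hTab
  -- summability of coefficients
  have hsum1 : Summable (fun k : ℕ => ((k : ℝ)) ^ m * ‖c k‖) := by
    have hinj : Function.Injective (Nat.cast : ℕ → ℤ) := fun a b h => by exact_mod_cast h
    have := hf_sum.comp_injective hinj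
    apply this.congr
    intro k
    simp [Function.comp]
  have hsum2 : Summable (fun k : ℕ => ((k : ℝ) + 1) ^ m * ‖c (-(k + 1))‖) := by
    have hinj : Function.Injective (fun k : ℕ => -((k : ℤ) + 1)) := by
      intro a b hab; simpa using hab
    have := hf_sum.comp_injective hinj
    apply this.congr
    intro k
    show (|((-((k : ℤ) + 1) : ℤ) : ℝ)|) ^ m * ‖c (-((k : ℤ) + 1))‖
        = ((k : ℝ) + 1) ^ m * ‖c (-((k : ℤ) + 1))‖
    have h2 : ((-((k : ℤ) + 1) : ℤ) : ℝ) = -((k : ℝ) + 1) := by push_cast; ring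
    rw [h2, abs_neg, _root_.abs_of_nonneg (by positivity)]
  -- the two families
  set F1 : ℕ → ℝ → (H →L[ℂ] H) := fun k t => c k • T t ^ k with hF1def
  set F2 : ℕ → ℝ → (H →L[ℂ] H) := fun k t => c (-(k + 1)) • adjoint (T t) ^ (k + 1) with hF2def
  set v1 : ℕ → ℕ → ℝ := fun j k => ‖c k‖ * ((k : ℝ) ^ j * ‖B‖ ^ j) with hv1def
  set v2 : ℕ → ℕ → ℝ := fun j k => ‖c (-(k + 1))‖ * (((k : ℝ) + 1) ^ j * ‖B‖ ^ j) with hv2def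
  have hv1 : ∀ j : ℕ, (j : ℕ∞) ≤ (m : ℕ∞) → Summable (v1 j) := by
    intro j hj
    have hj' : j ≤ m := Nat.cast_le.mp hj
    apply (summable_nat_add_iff 1).mp
    have h2 : Summable (fun k : ℕ => ((k + 1 : ℝ)) ^ m * ‖c (k + 1)‖ * ‖B‖ ^ j) :=
      (((summable_nat_add_iff 1).mpr hsum1).congr (by intro k; push_cast; ring)).mul_right _
    apply Summable.of_nonneg_of_le (fun k => by positivity) _ h2
    intro k
    have h1k : (1 : ℝ) ≤ (k : ℝ) + 1 := by
      have : (0 : ℝ) ≤ (k : ℝ) := Nat.cast_nonneg k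
      linarith
    have hpj : ((k : ℝ) + 1) ^ j ≤ ((k : ℝ) + 1) ^ m := pow_le_pow_right₀ h1k hj'
    calc v1 j (k + 1) = ((((k : ℕ) + 1 : ℕ) : ℝ)) ^ j * ‖c ((k : ℕ) + 1)‖ * ‖B‖ ^ j := by
          rw [hv1def]; push_cast; ring
      _ ≤ ((k : ℝ) + 1) ^ m * ‖c ((k : ℕ) + 1)‖ * ‖B‖ ^ j := by
          push_cast
          apply mul_le_mul_of_nonneg_right (mul_le_mul_of_nonneg_right hpj (norm_nonneg _))
            (by positivity)
      _ = ((k : ℝ) + 1) ^ m * ‖c (k + 1)‖ * ‖B‖ ^ j := by norm_cast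
  have hv2 : ∀ j : ℕ, (j : ℕ∞) ≤ (m : ℕ∞) → Summable (v2 j) := by
    intro j hj
    have hj' : j ≤ m := Nat.cast_le.mp hj
    apply Summable.of_nonneg_of_le (fun k => by positivity) _ (hsum2.mul_right (‖B‖ ^ j))
    intro k
    have h1k : (1 : ℝ) ≤ (k : ℝ) + 1 := by
      have : (0 : ℝ) ≤ (k : ℝ) := Nat.cast_nonneg k
      linarith
    have hpj : ((k : ℝ) + 1) ^ j ≤ ((k : ℝ) + 1) ^ m := pow_le_pow_right₀ h1k hj'
    calc v2 j k = ((k : ℝ) + 1) ^ j * ‖c (-(k + 1))‖ * ‖B‖ ^ j := by rw [hv2def]; ring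
      _ ≤ ((k : ℝ) + 1) ^ m * ‖c (-(k + 1))‖ * ‖B‖ ^ j := by
          apply mul_le_mul_of_nonneg_right (mul_le_mul_of_nonneg_right hpj (norm_nonneg _))
            (by positivity)
  -- smoothness of the families
  have hTcm : ∀ n : ℕ, ContDiff ℝ (n : WithTop ℕ∞) T := fun n => hTc.of_le (mod_cast le_top)
  have hTacm : ∀ n : ℕ, ContDiff ℝ (n : WithTop ℕ∞) (fun t : ℝ => adjoint (T t)) :=
    fun n => hTac.of_le (mod_cast le_top)
  have hfc1 : ∀ k : ℕ, ContDiff ℝ ((m : ℕ∞) : WithTop ℕ∞) (F1 k) := by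
    intro k
    have : ContDiff ℝ ((m : ℕ) : WithTop ℕ∞) (F1 k) := ((hTcm m).pow k).const_smul (c k)
    exact_mod_cast this
  have hfc2 : ∀ k : ℕ, ContDiff ℝ ((m : ℕ∞) : WithTop ℕ∞) (F2 k) := by
    intro k
    have : ContDiff ℝ ((m : ℕ) : WithTop ℕ∞) (F2 k) :=
      ((hTacm m).pow (k + 1)).const_smul (c (-(k + 1)))
    exact_mod_cast this
  -- derivative bounds for the families
  have h'f1 : ∀ (j k : ℕ) (x : ℝ), (j : ℕ∞) ≤ (m : ℕ∞) →
      ‖iteratedFDeriv ℝ j (F1 k) x‖ ≤ v1 j k := by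
    intro j k x _
    have h := iteratedFDeriv_const_smul_apply' (𝕜 := ℝ) (a := c k)
      (f := fun t : ℝ => T t ^ k) (x := x) ((hTcm j).pow k).contDiffAt
    rw [hF1def]
    show ‖iteratedFDeriv ℝ j (fun t : ℝ => c k • T t ^ k) x‖ ≤ _
    rw [h, norm_smul (c k) (iteratedFDeriv ℝ j (fun t : ℝ => T t ^ k) x)]
    exact mul_le_mul_of_nonneg_left (haux1 k j x) (norm_nonneg _)
  have h'f2 : ∀ (j k : ℕ) (x : ℝ), (j : ℕ∞) ≤ (m : ℕ∞) →
      ‖iteratedFDeriv ℝ j (F2 k) x‖ ≤ v2 j k := by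
    intro j k x _
    have h := iteratedFDeriv_const_smul_apply' (𝕜 := ℝ) (a := c (-(k + 1)))
      (f := fun t : ℝ => adjoint (T t) ^ (k + 1)) (x := x) ((hTacm j).pow (k + 1)).contDiffAt
    rw [hF2def]
    show ‖iteratedFDeriv ℝ j (fun t : ℝ => c (-(k + 1)) • adjoint (T t) ^ (k + 1)) x‖ ≤ _
    rw [h, norm_smul (c (-(k + 1))) (iteratedFDeriv ℝ j (fun t : ℝ => adjoint (T t) ^ (k + 1)) x)]
    have := haux2 (k + 1) j x
    have hcast : (((k + 1 : ℕ) : ℝ)) ^ j = ((k : ℝ) + 1) ^ j := by push_cast; ring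
    rw [hcast] at this
    exact mul_le_mul_of_nonneg_left this (norm_nonneg _)
  -- smoothness of the sums
  have hg1 : ContDiff ℝ ((m : ℕ∞)) (fun s : ℝ => ∑' k : ℕ, F1 k s) :=
    contDiff_tsum hfc1 hv1 h'f1
  have hg2 : ContDiff ℝ ((m : ℕ∞)) (fun s : ℝ => ∑' k : ℕ, F2 k s) :=
    contDiff_tsum hfc2 hv2 h'f2
  have hfTeq : fT = fun s : ℝ => (∑' k : ℕ, F1 k s) + ∑' k : ℕ, F2 k s := funext hfT
  constructor
  · rw [hfTeq]
    exact (hg1.add hg2).of_le (by exact_mod_cast hlm)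
  · intro s
    have hlm' : ((l : ℕ) : ℕ∞) ≤ ((m : ℕ) : ℕ∞) := by exact_mod_cast hlm
    refine ⟨?_, ?_, ?_⟩
    · apply Summable.of_nonneg_of_le (fun k => norm_nonneg _) _ (hv1 l hlm')
      intro k
      rw [norm_smul, ← norm_iteratedFDeriv_real]
      exact mul_le_mul_of_nonneg_left (haux1 k l s) (norm_nonneg _)
    · apply Summable.of_nonneg_of_le (fun k => norm_nonneg _) _ (hv2 l hlm')
      intro k
      rw [norm_smul, ← norm_iteratedFDeriv_real]
      have := haux2 (k + 1) l s
      have hcast : (((k + 1 : ℕ) : ℝ)) ^ l = ((k : ℝ) + 1) ^ l := by push_cast; ring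
      rw [hcast] at this
      exact mul_le_mul_of_nonneg_left this (norm_nonneg _)
    · have hg1l : ContDiff ℝ ((l : ℕ) : WithTop ℕ∞) (fun s : ℝ => ∑' k : ℕ, F1 k s) := by
        have := hg1.of_le (show ((l : ℕ∞) : WithTop ℕ∞) ≤ ((m : ℕ∞) : WithTop ℕ∞) by
          exact_mod_cast hlm)
        exact_mod_cast this
      have hg2l : ContDiff ℝ ((l : ℕ) : WithTop ℕ∞) (fun s : ℝ => ∑' k : ℕ, F2 k s) := by
        have := hg2.of_le (show ((l : ℕ∞) : WithTop ℕ∞) ≤ ((m : ℕ∞) : WithTop ℕ∞) by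
          exact_mod_cast hlm)
        exact_mod_cast this
      rw [hfTeq, aux_iteratedDeriv_add hg1l hg2l s,
        aux_iteratedDeriv_tsum hfc1 hv1 h'f1 hlm' s,
        aux_iteratedDeriv_tsum hfc2 hv2 h'f2 hlm' s]
      congr 1
      · exact tsum_congr fun k => aux_iteratedDeriv_smul (c k) ((hTcm l).pow k) s
      · exact tsum_congr fun k =>
          aux_iteratedDeriv_smul (c (-(k + 1))) ((hTacm l).pow (k + 1)) s
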